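/- Conversely, if T satisfies the k-safety property (pre, post), then there exists a composition-invariant pair (f, Inv) for T and (pre, post) (with no restriction on the language of f and Inv). In particular one may take f to be the lock-step composition C_{1..k} = true and Inv the set of composed states reachable from pre in the lock-step composed system. -/
import Mathlib


/-- If `T` satisfies the `k`-safety property `(pre, post)`, then a
composition-invariant pair exists; in particular, lock-step composition
(`C_{1..k} = true`, all other conditions `false`) together with the set of composed
states reachable from `pre` in the lock-step composed system forms such a pair. -/
theorem composition_invariant_pair_complete {S : Type*} {k : ℕ} (hk : 0 < k)
    (R : S → S → Prop) (F : Set S) (pre post : Set (Fin k → S))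
    (hterm : ∀ s ∈ F, R s s ∧ ∀ t, R s t → t = s)
    (hksafe : ∀ s t : Fin k → S, s ∈ pre →
      (∀ i, Relation.ReflTransGen R (s i) (t i) ∧ t i ∈ F) → t ∈ post) :
    let C : Finset (Fin k) → Set (Fin k → S) :=
      fun M => if M = Finset.univ then Set.univ else ∅
    let lockStep : (Fin k → S) → (Fin k → S) → Prop :=
      fun x x' => ∀ i, R (x i) (x' i)
    let Inv : Set (Fin k → S) :=
      {x | ∃ s ∈ pre, Relation.ReflTransGen lockStep s x}
    (pre ⊆ Inv) ∧
    (∀ M : Finset (Fin k), M.Nonempty → ∀ x x' : Fin k → S,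
      x ∈ Inv → x ∈ C M → (∀ i ∈ M, R (x i) (x' i)) → (∀ i ∉ M, x' i = x i) →
      x' ∈ Inv) ∧
    (∀ x ∈ Inv, (∀ i, x i ∈ F) → x ∈ post) ∧
    (∀ x ∈ Inv, ∃ M : Finset (Fin k), M.Nonempty ∧ x ∈ C M) ∧
    (∀ (M : Finset (Fin k)) (x : Fin k → S), x ∈ C M →
      (∃ i, x i ∉ F) → ∃ j ∈ M, x j ∉ F) := by

  intro C Inv lockStep
  refine ⟨?_, ?_, ?_, ?_, ?_⟩
  · intro s hs
    exact ⟨s, hs, Relation.ReflTransGen.refl⟩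
  · intro M hM x x' hx hxC hstep heq
    have hMuniv : M = Finset.univ := by
      by_contra h
      simp [C, h] at hxC
    obtain ⟨s, hs, hreach⟩ := hx
    refine ⟨s, hs, hreach.tail ?_⟩
    intro i
    exact hstep i (hMuniv ▸ Finset.mem_univ i)
  · intro x hx hF
    obtain ⟨s, hs, hreach⟩ := hx
    have key : ∀ i, Relation.ReflTransGen R (s i) (x i) := by
      clear hF
      induction hreach with
      | refl => exact fun _ => Relation.ReflTransGen.refl
      | tail _ h ih => exact fun i => (ih i).tail (h i)
    exact hksafe s x hs fun i => ⟨key i, hF i⟩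
  · intro x hx
    have : Nonempty (Fin k) := Fin.pos_iff_nonempty.mp hk
    exact ⟨Finset.univ, Finset.univ_nonempty, by simp [C]⟩
  · intro M x hxC ⟨i, hi⟩
    have hMuniv : M = Finset.univ := by
      by_contra h
      simp [C, h] at hxC
    exact ⟨i, hMuniv ▸ Finset.mem_univ i, hi⟩
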